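/- Let n ≥ 1 be an integer, let q satisfy 1 < q < ∞ if n ∈ {1,2} and 1 < q < n/(n−2) if n ≥ 3, and let μ₁, μ₂ ≤ 0 and β₁, β₂ > 0 satisfy μ₁·β₁^{q−1} = μ₂·β₂^{q−1}, β₁^{(q−2)/2}·μ₁ + β₂^{q/2} > 0 and β₂^{(q−2)/2}·μ₂ + β₁^{q/2} > 0, with μ₁, μ₂ < 0. Then every positive solution (u,v) of the system −u''(r) − ((n−1)/r) u'(r) + u(r) = μ₁·u(r)^{2q−1} + β₁·u(r)^{q−1} v(r)^q and −v''(r) − ((n−1)/r) v'(r) + v(r) = μ₂·v(r)^{2q−1} + β₂·u(r)^q v(r)^{q−1} for r > 0, with u'(0) = v'(0) = 0 and u(r), v(r) → 0 as r → ∞, satisfies u = (μ₂ + β₁^{q/2}·β₂^{−(q−2)/2})^{1/(2q−2)} · (μ₁ + β₂^{q/2}·β₁^{−(q−2)/2})^{−1/(2q−2)} · v. -/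

import Mathlib

open Real Set Filter

/-- `u` is twice continuously differentiable on `[0,∞)`, with first and second
derivative functions `u'` and `u''`. -/
def C2 (u u' u'' : ℝ → ℝ) : Prop :=
  (∀ r ∈ Set.Ici (0:ℝ), HasDerivWithinAt u (u' r) (Set.Ici 0) r) ∧
  (∀ r ∈ Set.Ici (0:ℝ), HasDerivWithinAt u' (u'' r) (Set.Ici 0) r) ∧
  ContinuousOn u'' (Set.Ici 0)

/-- `(u,v)` (with derivative data) is a positive solution of the Ma–Zhao system
`-u'' - ((n-1)/r) u' + u = μ₁ u^{2q-1} + β₁ u^{q-1} v^q`,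
`-v'' - ((n-1)/r) v' + v = μ₂ v^{2q-1} + β₂ u^q v^{q-1}` on `(0,∞)`,
with `u'(0) = v'(0) = 0`, `u, v > 0` and `u(r), v(r) → 0` as `r → ∞`. -/
def IsPosSolMZ (n : ℕ) (q μ₁ μ₂ β₁ β₂ : ℝ) (u u' u'' v v' v'' : ℝ → ℝ) : Prop :=
  C2 u u' u'' ∧ C2 v v' v'' ∧
  (∀ r : ℝ, 0 ≤ r → 0 < u r ∧ 0 < v r) ∧
  (∀ r : ℝ, 0 < r → -u'' r - ((n : ℝ) - 1) / r * u' r + u r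
      = μ₁ * u r ^ (2 * q - 1) + β₁ * u r ^ (q - 1) * v r ^ q) ∧
  (∀ r : ℝ, 0 < r → -v'' r - ((n : ℝ) - 1) / r * v' r + v r
      = μ₂ * v r ^ (2 * q - 1) + β₂ * u r ^ q * v r ^ (q - 1)) ∧
  u' 0 = 0 ∧ v' 0 = 0 ∧
  Tendsto u atTop (nhds 0) ∧ Tendsto v atTop (nhds 0)

lemma maxp (n : ℕ) (hn : 1 ≤ n) (w w' w'' g : ℝ → ℝ)
    (hw : ∀ r ∈ Set.Ici (0:ℝ), HasDerivWithinAt w (w' r) (Set.Ici 0) r)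
    (hw' : ∀ r ∈ Set.Ici (0:ℝ), HasDerivWithinAt w' (w'' r) (Set.Ici 0) r)
    (hw'' : ContinuousOn w'' (Set.Ici 0))
    (hz : w' 0 = 0) (hlim : Tendsto w atTop (nhds 0))
    (hg : ContinuousWithinAt g (Set.Ici 0) 0)
    (heq : ∀ r : ℝ, 0 < r → -w'' r - ((n:ℝ)-1)/r * w' r + w r = g r)
    (hsign : ∀ r : ℝ, 0 ≤ r → w r * g r ≤ 0) :
    ∀ r : ℝ, 0 ≤ r → w r ≤ 0 := by
  by_contra hcon
  push_neg at hcon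
  obtain ⟨r₀, hr₀, hwr₀⟩ := hcon
  have hcont : ContinuousOn w (Set.Ici 0) := fun r hr => (hw r hr).continuousWithinAt
  -- eventually small
  have hev : ∀ᶠ r in atTop, w r < w r₀ := hlim.eventually_lt_const hwr₀
  obtain ⟨R, hR⟩ := eventually_atTop.mp hev
  set R' := max R r₀ with hR'
  have hr₀R : r₀ ≤ R' := le_max_right _ _
  have hcpt : IsCompact (Set.Icc (0:ℝ) R') := isCompact_Icc
  obtain ⟨rs, hrsmem, hmax⟩ := hcpt.exists_isMaxOn ⟨r₀, hr₀, hr₀R⟩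
    (hcont.mono (Set.Icc_subset_Ici_self))
  have hrs0 : 0 ≤ rs := hrsmem.1
  have hr₀le : w r₀ ≤ w rs := hmax ⟨hr₀, hr₀R⟩
  have hM : 0 < w rs := lt_of_lt_of_le hwr₀ hr₀le
  have hglob : ∀ r : ℝ, 0 ≤ r → w r ≤ w rs := by
    intro r hr
    rcases le_or_gt r R' with h | h
    · exact hmax ⟨hr, h⟩
    · exact le_trans (le_of_lt (hR r (le_trans (le_max_left _ _) h.le))) hr₀le
  have hgneg : g rs ≤ 0 := by nlinarith [hsign rs hrs0]
  -- key: eventually w' > 0 to the right of rs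
  have key : ∀ᶠ x in nhdsWithin rs (Set.Ioi rs), 0 < w' x := by
    rcases eq_or_lt_of_le hrs0 with h0 | hpos
    · -- rs = 0
      subst h0
      have hslope0 : Tendsto (slope w' 0) (nhdsWithin 0 (Set.Ioi 0)) (nhds (w'' 0)) := by
        have := hasDerivWithinAt_iff_tendsto_slope.mp (hw' 0 Set.self_mem_Ici)
        rwa [Set.Ici_sdiff_left] at this
      have hqt : Tendsto (fun x => w' x / x) (nhdsWithin 0 (Set.Ioi 0)) (nhds (w'' 0)) := by
        refine hslope0.congr (fun x => ?_)
        rw [slope_def_field, hz, sub_zero, sub_zero]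
      have hwt : Tendsto w (nhdsWithin 0 (Set.Ioi 0)) (nhds (w 0)) :=
        ((hw 0 Set.self_mem_Ici).continuousWithinAt).mono Set.Ioi_subset_Ici_self
      have hw''t : Tendsto w'' (nhdsWithin 0 (Set.Ioi 0)) (nhds (w'' 0)) :=
        (hw''.continuousWithinAt (Set.self_mem_Ici)).mono Set.Ioi_subset_Ici_self
      have hgt : Tendsto g (nhdsWithin 0 (Set.Ioi 0)) (nhds (g 0)) :=
        hg.mono Set.Ioi_subset_Ici_self
      have hcomb : Tendsto (fun r => -w'' r - ((n:ℝ)-1) * (w' r / r) + w r - g r)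
          (nhdsWithin 0 (Set.Ioi 0))
          (nhds (-w'' 0 - ((n:ℝ)-1) * w'' 0 + w 0 - g 0)) := by
        exact ((hw''t.neg.sub (hqt.const_mul _)).add hwt).sub hgt
      have hzero : Tendsto (fun r : ℝ => (0:ℝ)) (nhdsWithin 0 (Set.Ioi 0))
          (nhds (-w'' 0 - ((n:ℝ)-1) * w'' 0 + w 0 - g 0)) := by
        refine hcomb.congr' ?_
        filter_upwards [self_mem_nhdsWithin] with r hr
        have hr' : (0:ℝ) < r := hr
        have h1 := heq r hr'
        have h2 : ((n:ℝ)-1)/r * w' r = ((n:ℝ)-1) * (w' r / r) := by ring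
        rw [h2] at h1
        linarith
      have huniq : -w'' 0 - ((n:ℝ)-1) * w'' 0 + w 0 - g 0 = 0 :=
        tendsto_nhds_unique hzero tendsto_const_nhds
      have hn1 : (1:ℝ) ≤ (n:ℝ) := by exact_mod_cast hn
      have hw''pos : 0 < w'' 0 := by nlinarith
      have hevs : ∀ᶠ x in nhdsWithin 0 (Set.Ioi 0), 0 < w' x / x :=
        hqt.eventually (eventually_gt_nhds hw''pos)
      filter_upwards [hevs, self_mem_nhdsWithin] with x hx hx2
      have hx' : (0:ℝ) < x := hx2
      have := mul_pos hx hx'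
      rwa [div_mul_cancel₀ _ (ne_of_gt hx')] at this
    · -- rs > 0
      have hnb : Set.Ici (0:ℝ) ∈ nhds rs := mem_of_superset (Ioi_mem_nhds hpos) Set.Ioi_subset_Ici_self
      have hda : HasDerivAt w (w' rs) rs := (hw rs hrs0).hasDerivAt hnb
      have hda' : HasDerivAt w' (w'' rs) rs := (hw' rs hrs0).hasDerivAt hnb
      have hloc : IsLocalMax w rs := by
        filter_upwards [Ioi_mem_nhds hpos] with x hx
        exact hglob x (le_of_lt hx)
      have hd0 : w' rs = 0 := hloc.hasDerivAt_eq_zero hda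
      have hw''pos : 0 < w'' rs := by
        have := heq rs hpos
        rw [hd0] at this
        nlinarith
      -- slope of w' tends to w'' rs > 0
      have hslope : Tendsto (slope w' rs) (nhdsWithin rs ({rs}ᶜ)) (nhds (w'' rs)) := by
        have := hasDerivAt_iff_tendsto_slope.mp hda'
        exact this
      have hevs : ∀ᶠ x in nhdsWithin rs ({rs}ᶜ), 0 < slope w' rs x :=
        hslope.eventually (eventually_gt_nhds hw''pos)
      have hmono : nhdsWithin rs (Set.Ioi rs) ≤ nhdsWithin rs ({rs}ᶜ) :=
        nhdsWithin_mono _ (fun x hx => ne_of_gt hx)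
      filter_upwards [hmono hevs, self_mem_nhdsWithin] with x hx hx2
      rw [slope_def_field, hd0, sub_zero] at hx
      have hxr : 0 < x - rs := sub_pos.mpr hx2
      have := mul_pos hx hxr
      rw [div_mul_cancel₀] at this
      · exact this
      · exact ne_of_gt hxr
  -- from key, find b > rs with w b > w rs; contradiction
  obtain ⟨uu, huu, hsub⟩ := mem_nhdsGT_iff_exists_Ioo_subset.mp key
  set b := (rs + uu)/2 with hb
  have huu' : rs < uu := huu
  have hrb : rs < b := by simp only [hb]; linarith
  have hbu : b < uu := by simp only [hb]; linarith
  have hcont2 : ContinuousOn w (Set.Icc rs b) :=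
    hcont.mono (fun x hx => le_trans hrs0 hx.1)
  have hderiv : ∀ x ∈ Set.Ioo rs b, HasDerivAt w (w' x) x := by
    intro x hx
    have hx0 : 0 < x := lt_of_le_of_lt hrs0 hx.1
    exact (hw x (le_of_lt hx0)).hasDerivAt
      (mem_of_superset (Ioi_mem_nhds hx0) Set.Ioi_subset_Ici_self)
  obtain ⟨c, hc, hceq⟩ := exists_hasDerivAt_eq_slope w w' hrb hcont2 hderiv
  have hcpos : 0 < w' c := hsub ⟨hc.1, lt_trans hc.2 hbu⟩
  have : 0 < (w b - w rs) / (b - rs) := hceq ▸ hcpos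
  have hwb : w rs < w b := by
    have hbr : 0 < b - rs := sub_pos.mpr hrb
    nlinarith [this, mul_pos this hbr, div_mul_cancel₀ (w b - w rs) (ne_of_gt hbr)]
  exact absurd (hglob b (le_trans hrs0 hrb.le)) (not_le.mpr hwb)

/-- Theorem 2 of Ma–Zhao: under the stated conditions on `μ₁, μ₂, β₁, β₂, q`, every
positive solution `(u,v)` of the Ma–Zhao system satisfies
`u = (μ₂ + β₁^{q/2} β₂^{-(q-2)/2})^{1/(2q-2)} (μ₁ + β₂^{q/2} β₁^{-(q-2)/2})^{-1/(2q-2)} v`. -/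
theorem MaZhao_proportionality (n : ℕ) (hn : 1 ≤ n) (q μ₁ μ₂ β₁ β₂ : ℝ)
    (hq : 1 < q) (hqsub : 3 ≤ n → q < (n : ℝ) / ((n : ℝ) - 2))
    (hμ₁ : μ₁ < 0) (hμ₂ : μ₂ < 0) (hβ₁ : 0 < β₁) (hβ₂ : 0 < β₂)
    (hrel : μ₁ * β₁ ^ (q - 1) = μ₂ * β₂ ^ (q - 1))
    (hpos₁ : 0 < β₁ ^ ((q - 2) / 2) * μ₁ + β₂ ^ (q / 2))
    (hpos₂ : 0 < β₂ ^ ((q - 2) / 2) * μ₂ + β₁ ^ (q / 2))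
    (u u' u'' v v' v'' : ℝ → ℝ)
    (hsol : IsPosSolMZ n q μ₁ μ₂ β₁ β₂ u u' u'' v v' v'') :
    ∀ r : ℝ, 0 ≤ r →
      u r = (μ₂ + β₁ ^ (q / 2) * β₂ ^ (-(q - 2) / 2)) ^ (1 / (2 * q - 2)) *
        (μ₁ + β₂ ^ (q / 2) * β₁ ^ (-(q - 2) / 2)) ^ (-(1 / (2 * q - 2))) * v r := by

  obtain ⟨⟨hu, hu', hu''⟩, ⟨hv, hv', hv''⟩, hposuv, hequ, heqv, hu'0, hv'0, hulim, hvlim⟩ := hsol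
  have hβq : 0 < β₁ / β₂ := div_pos hβ₁ hβ₂
  set t := (β₁ / β₂) ^ ((1:ℝ)/2) with htdef
  have ht : 0 < t := Real.rpow_pos_of_pos hβq _
  have htt : t * t = β₁ / β₂ := by
    rw [htdef, ← Real.rpow_add hβq]; norm_num
  have hβ₁eq : β₁ = β₂ * (t * t) := by rw [htt]; field_simp
  have ht2q : t ^ (2*q-2) = (β₁/β₂) ^ (q-1) := by
    rw [htdef, ← Real.rpow_mul hβq.le]; congr 1; ring
  have ht3 : t ^ (2*q-2) = β₁ ^ (q-1) * β₂ ^ (-(q-1)) := by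
    rw [ht2q, Real.div_rpow hβ₁.le hβ₂.le, Real.rpow_neg hβ₂.le, div_eq_mul_inv]
  have hb2q : 0 < β₂ ^ (q-1) := Real.rpow_pos_of_pos hβ₂ _
  have hμ2 : μ₂ = μ₁ * t ^ (2*q-2) := by
    rw [ht3, Real.rpow_neg hβ₂.le]
    field_simp
    linarith [hrel]
  have h2q2 : (0:ℝ) < 2*q-2 := by linarith
  have hq1 : (0:ℝ) < 2*q-1 := by linarith
  -- the comparison function g
  set g : ℝ → ℝ := fun r => μ₁ * (u r ^ (2*q-1) - (t * v r) ^ (2*q-1))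
      - β₂ * t * u r ^ (q-1) * v r ^ (q-1) * (u r - t * v r) with hgdef
  -- the ODE satisfied by w = u - t v
  have heqw : ∀ r : ℝ, 0 < r →
      -(u'' r - t * v'' r) - ((n:ℝ)-1)/r * (u' r - t * v' r) + (u r - t * v r) = g r := by
    intro r hr
    have ha := (hposuv r hr.le).1
    have hb := (hposuv r hr.le).2
    have H1 := hequ r hr
    have H2 := heqv r hr
    have e1 : v r ^ q = v r ^ (q - 1) * v r := by
      nth_rewrite 1 [show q = q - 1 + 1 by ring]
      rw [Real.rpow_add_one hb.ne']
    have e2 : u r ^ q = u r ^ (q - 1) * u r := by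
      nth_rewrite 1 [show q = q - 1 + 1 by ring]
      rw [Real.rpow_add_one ha.ne']
    have e3 : (t * v r) ^ (2*q-1) = t ^ (2*q-2) * t * v r ^ (2*q-1) := by
      rw [Real.mul_rpow ht.le hb.le]
      nth_rewrite 1 [show 2*q-1 = (2*q-2) + 1 by ring]
      rw [Real.rpow_add_one ht.ne']
    rw [e1, hβ₁eq] at H1
    rw [e2, hμ2] at H2
    simp only [hgdef]
    rw [e3]
    linear_combination H1 - t * H2
  -- sign condition
  have hsignw : ∀ r : ℝ, 0 ≤ r → (u r - t * v r) * g r ≤ 0 := by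
    intro r hr
    have ha := (hposuv r hr).1
    have hb := (hposuv r hr).2
    have hX : 0 < u r ^ (q-1) := Real.rpow_pos_of_pos ha _
    have hY : 0 < v r ^ (q-1) := Real.rpow_pos_of_pos hb _
    simp only [hgdef]
    rcases lt_trichotomy (u r) (t * v r) with hlt | heq0 | hgt
    · have hP : u r ^ (2*q-1) < (t * v r) ^ (2*q-1) :=
        Real.rpow_lt_rpow ha.le hlt hq1
      have t1 : 0 < μ₁ * (u r ^ (2*q-1) - (t * v r) ^ (2*q-1)) :=
        mul_pos_of_neg_of_neg hμ₁ (by linarith)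
      have t2 : β₂ * t * u r ^ (q-1) * v r ^ (q-1) * (u r - t * v r) < 0 := by
        apply mul_neg_of_pos_of_neg
        · positivity
        · linarith
      exact le_of_lt (mul_neg_of_neg_of_pos (by linarith) (by linarith))
    · rw [heq0, sub_self, zero_mul]
    · have hP : (t * v r) ^ (2*q-1) < u r ^ (2*q-1) :=
        Real.rpow_lt_rpow (by positivity) hgt hq1
      have t1 : μ₁ * (u r ^ (2*q-1) - (t * v r) ^ (2*q-1)) < 0 :=
        mul_neg_of_neg_of_pos hμ₁ (by linarith)
      have t2 : 0 < β₂ * t * u r ^ (q-1) * v r ^ (q-1) * (u r - t * v r) := by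
        apply mul_pos
        · positivity
        · linarith
      exact le_of_lt (mul_neg_of_pos_of_neg (by linarith) (by linarith))
  -- continuity of g on [0, ∞)
  have hcu : ContinuousOn u (Set.Ici 0) := fun r hr => (hu r hr).continuousWithinAt
  have hcv : ContinuousOn v (Set.Ici 0) := fun r hr => (hv r hr).continuousWithinAt
  have hgc : ContinuousOn g (Set.Ici 0) := by
    simp only [hgdef]
    apply ContinuousOn.sub
    · apply continuousOn_const.mul
      apply ContinuousOn.sub
      · exact hcu.rpow_const (fun x hx => Or.inl (ne_of_gt (hposuv x hx).1))
      · exact (continuousOn_const.mul hcv).rpow_const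
          (fun x hx => Or.inl (ne_of_gt (mul_pos ht (hposuv x hx).2)))
    · apply ContinuousOn.mul
      · apply ContinuousOn.mul
        · exact continuousOn_const.mul
            (hcu.rpow_const (fun x hx => Or.inl (ne_of_gt (hposuv x hx).1)))
        · exact hcv.rpow_const (fun x hx => Or.inl (ne_of_gt (hposuv x hx).2))
      · exact hcu.sub (continuousOn_const.mul hcv)
  -- apply the maximum principle in both directions
  have W1 := maxp n hn (fun r => u r - t * v r) (fun r => u' r - t * v' r)
      (fun r => u'' r - t * v'' r) g
      (fun r hr => (hu r hr).sub ((hv r hr).const_mul t))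
      (fun r hr => (hu' r hr).sub ((hv' r hr).const_mul t))
      (hu''.sub (continuousOn_const.mul hv''))
      (by simp [hu'0, hv'0])
      (by simpa using hulim.sub (hvlim.const_mul t))
      (hgc 0 Set.self_mem_Ici)
      heqw hsignw
  have W2 := maxp n hn (fun r => t * v r - u r) (fun r => t * v' r - u' r)
      (fun r => t * v'' r - u'' r) (fun r => -(g r))
      (fun r hr => ((hv r hr).const_mul t).sub (hu r hr))
      (fun r hr => ((hv' r hr).const_mul t).sub (hu' r hr))
      ((continuousOn_const.mul hv'').sub hu'')
      (by simp [hu'0, hv'0])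
      (by simpa using (hvlim.const_mul t).sub hulim)
      ((hgc 0 Set.self_mem_Ici).neg)
      (fun r hr => by have := heqw r hr; linarith)
      (fun r hr => by
        have := hsignw r hr
        calc (t * v r - u r) * -(g r) = (u r - t * v r) * g r := by ring
          _ ≤ 0 := this)
  have huv : ∀ r : ℝ, 0 ≤ r → u r = t * v r := by
    intro r hr
    have h1 := W1 r hr
    have h2 := W2 r hr
    linarith
  have m1 : β₁ ^ (-(q-2)/2) * β₁ ^ (q-1) = β₁ ^ (q/2) := by
    rw [← Real.rpow_add hβ₁]; congr 1; ring
  have m2 : β₂ ^ (q/2) * β₂ ^ (-(q-1)) = β₂ ^ (-(q-2)/2) := by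
    rw [← Real.rpow_add hβ₂]; congr 1; ring
  have hkey : β₂ ^ (q/2) * β₁ ^ (-(q-2)/2) * t ^ (2*q-2) = β₁ ^ (q/2) * β₂ ^ (-(q-2)/2) := by
    rw [ht3]
    linear_combination (β₂ ^ (q/2) * β₂ ^ (-(q-1))) * m1 + β₁ ^ (q/2) * m2
  have hAB : (μ₂ + β₁ ^ (q / 2) * β₂ ^ (-(q - 2) / 2))
      = (μ₁ + β₂ ^ (q / 2) * β₁ ^ (-(q - 2) / 2)) * t ^ (2*q-2) := by
    linear_combination hμ2 - hkey
  -- positivity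
  have hxpos1 : 0 < β₁ ^ (-(q-2)/2) := Real.rpow_pos_of_pos hβ₁ _
  have hxpos2 : 0 < β₂ ^ (-(q-2)/2) := Real.rpow_pos_of_pos hβ₂ _
  have hprod1 : β₁ ^ (-(q-2)/2) * β₁ ^ ((q-2)/2) = 1 := by
    rw [← Real.rpow_add hβ₁, show -(q-2)/2 + (q-2)/2 = 0 by ring, Real.rpow_zero]
  have hprod2 : β₂ ^ (-(q-2)/2) * β₂ ^ ((q-2)/2) = 1 := by
    rw [← Real.rpow_add hβ₂, show -(q-2)/2 + (q-2)/2 = 0 by ring, Real.rpow_zero]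
  have hBpos : 0 < μ₁ + β₂ ^ (q / 2) * β₁ ^ (-(q - 2) / 2) := by
    have h := mul_pos hxpos1 hpos₁
    have hexp : β₁ ^ (-(q-2)/2) * (β₁ ^ ((q-2)/2) * μ₁ + β₂ ^ (q/2))
        = μ₁ + β₂ ^ (q/2) * β₁ ^ (-(q-2)/2) := by linear_combination μ₁ * hprod1
    rw [hexp] at h; exact h
  have hApos : 0 < μ₂ + β₁ ^ (q / 2) * β₂ ^ (-(q - 2) / 2) := by
    have h := mul_pos hxpos2 hpos₂
    have hexp : β₂ ^ (-(q-2)/2) * (β₂ ^ ((q-2)/2) * μ₂ + β₁ ^ (q/2))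
        = μ₂ + β₁ ^ (q/2) * β₂ ^ (-(q-2)/2) := by linear_combination μ₂ * hprod2
    rw [hexp] at h; exact h
  -- the constant equals t
  have hc2 : (2*q-2) * (1/(2*q-2)) = 1 := mul_one_div_cancel (ne_of_gt h2q2)
  have ht1 : (t ^ (2*q-2)) ^ (1/(2*q-2)) = t := by
    rw [← Real.rpow_mul ht.le, hc2, Real.rpow_one]
  have hApow : (μ₂ + β₁ ^ (q / 2) * β₂ ^ (-(q - 2) / 2)) ^ (1/(2*q-2))
      = (μ₁ + β₂ ^ (q / 2) * β₁ ^ (-(q - 2) / 2)) ^ (1/(2*q-2)) * t := by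
    rw [hAB, Real.mul_rpow hBpos.le (Real.rpow_pos_of_pos ht (2*q-2)).le, ht1]
  have hBB : (μ₁ + β₂ ^ (q / 2) * β₁ ^ (-(q - 2) / 2)) ^ (1/(2*q-2))
      * (μ₁ + β₂ ^ (q / 2) * β₁ ^ (-(q - 2) / 2)) ^ (-(1/(2*q-2))) = 1 := by
    rw [← Real.rpow_add hBpos, show 1/(2*q-2) + -(1/(2*q-2)) = 0 by ring, Real.rpow_zero]
  have hconst : (μ₂ + β₁ ^ (q / 2) * β₂ ^ (-(q - 2) / 2)) ^ (1 / (2 * q - 2)) *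
        (μ₁ + β₂ ^ (q / 2) * β₁ ^ (-(q - 2) / 2)) ^ (-(1 / (2 * q - 2))) = t := by
    rw [hApow]
    calc (μ₁ + β₂ ^ (q / 2) * β₁ ^ (-(q - 2) / 2)) ^ (1/(2*q-2)) * t *
          (μ₁ + β₂ ^ (q / 2) * β₁ ^ (-(q - 2) / 2)) ^ (-(1 / (2 * q - 2)))
        = t * ((μ₁ + β₂ ^ (q / 2) * β₁ ^ (-(q - 2) / 2)) ^ (1/(2*q-2)) *
          (μ₁ + β₂ ^ (q / 2) * β₁ ^ (-(q - 2) / 2)) ^ (-(1/(2*q-2)))) := by ring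
      _ = t := by rw [hBB, mul_one]
  intro r hr
  rw [hconst]
  exact huv r hr
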